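/- Let U ⊆ ℝ² be a set such that both U and its complement Uᶜ contain a parabolic region. Then there exist a continuous map γ : ℝ → ℝ² with ‖γ(t)‖ → ∞ as |t| → ∞, a real number T > 0, and constants c > 0 and ρ > 0, such that: γ(t) ∈ U for all t ≥ T; γ(t) ∈ Uᶜ for all t ≤ −T; and 1 + d(x, ∂U) + d(x, Γ) ≥ ‖x‖^c for all x ∈ ℝ² with ‖x‖ ≥ ρ, where Γ = γ(ℝ) is the range of γ. -/
import Mathlib


open Metric Set Filter

noncomputable section

/-- A parabolic region in the Euclidean plane: the image under a rigid motion
(surjective isometry) of `{y : y₁ ≥ 0, |y₂| ≤ y₁^α}` for some `α > 0`. -/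
def IsParabolicRegion (P : Set (EuclideanSpace ℝ (Fin 2))) : Prop :=
  ∃ α : ℝ, 0 < α ∧ ∃ M : EuclideanSpace ℝ (Fin 2) ≃ᵢ EuclideanSpace ℝ (Fin 2),
    P = M '' {y : EuclideanSpace ℝ (Fin 2) | 0 ≤ y 0 ∧ |y 1| ≤ (y 0) ^ α}


abbrev E2' := EuclideanSpace ℝ (Fin 2)

lemma coord_dist_le' (z w : E2') (i : Fin 2) : dist (z i) (w i) ≤ dist z w := by
  rw [EuclideanSpace.dist_eq]
  rw [show dist (z i) (w i) = √(dist (z i) (w i) ^ 2) from (Real.sqrt_sq dist_nonneg).symm]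
  exact Real.sqrt_le_sqrt <| Finset.single_le_sum
    (f := fun j => dist (z j) (w j) ^ 2) (fun j _ => sq_nonneg _) (Finset.mem_univ i)

lemma single_mem_parab' {α s : ℝ} (hs : 0 ≤ s) :
    (EuclideanSpace.single 0 s : E2') ∈ {y : E2' | 0 ≤ y 0 ∧ |y 1| ≤ (y 0) ^ α} := by
  refine ⟨by simpa using hs, ?_⟩
  simp only [EuclideanSpace.single_apply]
  norm_num
  positivity

lemma ball_subset_parab' {α s : ℝ} (hα : 0 < α) (hs : 0 < s) :
    ball (EuclideanSpace.single 0 s : E2') (min (s/2) ((s/2) ^ α)) ⊆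
      {y : E2' | 0 ≤ y 0 ∧ |y 1| ≤ (y 0) ^ α} := by
  intro z hz
  rw [mem_ball] at hz
  have h0 : dist (z 0) s < min (s/2) ((s/2) ^ α) := by
    have := coord_dist_le' z (EuclideanSpace.single 0 s) 0
    simp only [EuclideanSpace.single_apply, if_pos rfl] at this
    exact lt_of_le_of_lt this hz
  have h1 : |z 1| < min (s/2) ((s/2) ^ α) := by
    have := coord_dist_le' z (EuclideanSpace.single 0 s) 1
    simp only [EuclideanSpace.single_apply] at this
    norm_num at this
    calc |z 1| = dist (z 1) 0 := by rw [Real.dist_eq, sub_zero]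
    _ ≤ dist z _ := by rw [Real.dist_eq, sub_zero]; exact this
    _ < _ := hz
  have hz0 : s / 2 ≤ z 0 := by
    have h0' : |z 0 - s| < s / 2 := by
      rw [← Real.dist_eq]; exact h0.trans_le (min_le_left _ _)
    have := abs_lt.mp h0'
    linarith [this.1]
  constructor
  · linarith
  · calc |z 1| ≤ (s/2) ^ α := (h1.trans_le (min_le_right _ _)).le
    _ ≤ (z 0) ^ α := Real.rpow_le_rpow (by linarith) hz0 hα.le

lemma deep_axis' {α : ℝ} (hα : 0 < α) (M : E2' ≃ᵢ E2') {V : Set E2'}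
    (hV : M '' {y : E2' | 0 ≤ y 0 ∧ |y 1| ≤ (y 0) ^ α} ⊆ V) (hVc : Vᶜ.Nonempty)
    {s : ℝ} (hs : 0 < s) :
    min (s/2) ((s/2) ^ α) ≤ infDist (M (EuclideanSpace.single 0 s)) Vᶜ := by
  by_contra h
  push_neg at h
  obtain ⟨z, hz, hdz⟩ := (infDist_lt_iff hVc).mp h
  have hzball : z ∈ ball (M (EuclideanSpace.single 0 s)) (min (s/2) ((s/2) ^ α)) :=
    mem_ball'.mpr hdz
  rw [← M.image_ball] at hzball
  obtain ⟨y, hy, rfl⟩ := hzball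
  exact hz (hV (mem_image_of_mem M (ball_subset_parab' hα hs hy)))

lemma norm_axis_dist' (M : E2' ≃ᵢ E2') (s : ℝ) :
    dist (M (EuclideanSpace.single 0 s)) (M 0) = |s| := by
  rw [M.dist_eq]
  have h0 : (0 : E2') = EuclideanSpace.single 0 (0 : ℝ) := by
    ext i; simp [EuclideanSpace.single_apply]
  rw [h0, EuclideanSpace.dist_single_same, Real.dist_eq, sub_zero]

set_option maxHeartbeats 1000000 in
theorem exists_transverse_curve (U : Set (EuclideanSpace ℝ (Fin 2)))
    (hU : ∃ P, IsParabolicRegion P ∧ P ⊆ U)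
    (hUc : ∃ P, IsParabolicRegion P ∧ P ⊆ Uᶜ) :
    ∃ (γ : ℝ → EuclideanSpace ℝ (Fin 2)) (T c ρ : ℝ),
      Continuous γ ∧
      Tendsto (fun t => ‖γ t‖) (cocompact ℝ) atTop ∧
      0 < T ∧ 0 < c ∧ 0 < ρ ∧
      (∀ t : ℝ, T ≤ t → γ t ∈ U) ∧
      (∀ t : ℝ, t ≤ -T → γ t ∈ Uᶜ) ∧
      (∀ x : EuclideanSpace ℝ (Fin 2), ρ ≤ ‖x‖ →
        ‖x‖ ^ c ≤ 1 + infDist x (frontier U) + infDist x (Set.range γ)) := by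
  obtain ⟨P₁, ⟨α₁, hα₁, M₁, rfl⟩, hP₁⟩ := hU
  obtain ⟨P₂, ⟨α₂, hα₂, M₂, rfl⟩, hP₂⟩ := hUc
  -- notation
  set p : ℝ → E2' := fun s => M₁ (EuclideanSpace.single 0 s) with hp
  set q : ℝ → E2' := fun s => M₂ (EuclideanSpace.single 0 s) with hq
  set mid : ℝ → E2' := fun t => ((1 - t)/2) • q 1 + ((1 + t)/2) • p 1 with hmid
  set γ : ℝ → E2' := fun t => if t ≤ -1 then q (-t) else if t ≤ 1 then mid t else p t with hγ
  set β : ℝ := min (min α₁ α₂) 1 with hβ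
  have hβpos : 0 < β := lt_min (lt_min hα₁ hα₂) one_pos
  have hβ1 : β ≤ 1 := min_le_right _ _
  have hβα₁ : β ≤ α₁ := le_trans (min_le_left _ _) (min_le_left _ _)
  have hβα₂ : β ≤ α₂ := le_trans (min_le_left _ _) (min_le_right _ _)
  set A : ℝ := ‖M₁ 0‖ + ‖M₂ 0‖ with hA
  have hA0 : 0 ≤ A := by positivity
  set ρ : ℝ := 4 * A + 8 + 16 ^ ((2:ℝ)/β) with hρ
  have h16pos : (0:ℝ) < 16 ^ ((2:ℝ)/β) := Real.rpow_pos_of_pos (by norm_num) _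
  have hρpos : 0 < ρ := by positivity
  -- basic curve facts
  have hγpos : ∀ t : ℝ, 1 ≤ t → γ t = p t := by
    intro t ht
    rcases lt_or_eq_of_le ht with ht' | ht'
    · simp only [hγ, if_neg (by linarith : ¬ t ≤ -1), if_neg (by linarith : ¬ t ≤ 1)]
    · subst ht'
      simp only [hγ, if_neg (by norm_num : ¬ (1:ℝ) ≤ -1), if_pos le_rfl, hmid]
      norm_num
  have hγneg : ∀ t : ℝ, t ≤ -1 → γ t = q (-t) := by
    intro t ht
    simp only [hγ, if_pos ht]
  -- norm bounds on axes
  have hnormp : ∀ s : ℝ, |s| - A ≤ ‖p s‖ ∧ ‖p s‖ ≤ |s| + A := by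
    intro s
    have hd := norm_axis_dist' M₁ s
    have h1 := dist_triangle (p s) (M₁ 0) 0
    have h2 := dist_triangle (p s) 0 (M₁ 0)
    rw [dist_zero_right] at h1 h2
    rw [dist_zero_left] at h2
    rw [dist_zero_right] at h1
    have hd' : dist (p s) (M₁ 0) = |s| := hd
    constructor <;> [linarith [norm_nonneg (M₂ 0)]; linarith [norm_nonneg (M₂ 0)]]
  have hnormq : ∀ s : ℝ, |s| - A ≤ ‖q s‖ ∧ ‖q s‖ ≤ |s| + A := by
    intro s
    have hd := norm_axis_dist' M₂ s
    have h1 := dist_triangle (q s) (M₂ 0) 0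
    have h2 := dist_triangle (q s) 0 (M₂ 0)
    rw [dist_zero_right] at h1 h2
    rw [dist_zero_left] at h2
    rw [dist_zero_right] at h1
    have hd' : dist (q s) (M₂ 0) = |s| := hd
    constructor <;> [linarith [norm_nonneg (M₁ 0)]; linarith [norm_nonneg (M₁ 0)]]
  -- continuity
  have hsing : Continuous (fun s : ℝ => (EuclideanSpace.single 0 s : E2')) :=
    (Isometry.of_dist_eq fun a b => by
      rw [EuclideanSpace.dist_single_same]).continuous
  have hcp : Continuous p := M₁.continuous.comp hsing
  have hcq : Continuous q := M₂.continuous.comp hsing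
  have hcmid : Continuous mid := by
    rw [hmid]
    fun_prop
  have hcγ : Continuous γ := by
    rw [hγ]
    apply Continuous.if_le (hcq.comp continuous_neg) _ continuous_id continuous_const
    · intro t ht
      subst ht
      simp only [hmid, if_pos (by norm_num : (-1:ℝ) ≤ 1)]
      norm_num
    · apply Continuous.if_le hcmid hcp continuous_id continuous_const
      intro t ht
      subst ht
      simp only [hmid]
      norm_num
  -- membership
  have hmemU : ∀ t : ℝ, (1:ℝ) ≤ t → γ t ∈ U := by
    intro t ht
    rw [hγpos t ht]
    exact hP₁ (mem_image_of_mem M₁ (single_mem_parab' (by linarith)))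
  have hmemUc : ∀ t : ℝ, t ≤ -(1:ℝ) → γ t ∈ Uᶜ := by
    intro t ht
    rw [hγneg t ht]
    exact hP₂ (mem_image_of_mem M₂ (single_mem_parab' (by linarith)))
  -- tendsto
  have htends : Tendsto (fun t => ‖γ t‖) (cocompact ℝ) atTop := by
    apply tendsto_atTop_mono' (cocompact ℝ)
      (f₁ := fun t : ℝ => |t| - A)
    · filter_upwards [tendsto_norm_cocompact_atTop.eventually_ge_atTop 1] with t ht
      rw [Real.norm_eq_abs] at ht
      rcases le_or_gt 1 t with ht1 | ht1
      · rw [hγpos t ht1]; exact (hnormp t).1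
      · have ht2 : t ≤ -1 := by
          rcases abs_cases t with ⟨h, _⟩ | ⟨h, _⟩ <;> linarith
        rw [hγneg t ht2]
        have := (hnormq (-t)).1
        rw [abs_neg] at this
        exact this
    · have h1 : Tendsto (fun t : ℝ => ‖t‖ + -A) (cocompact ℝ) atTop :=
        tendsto_atTop_add_const_right _ (-A) tendsto_norm_cocompact_atTop
      refine h1.congr fun t => ?_
      rw [Real.norm_eq_abs]; ring
  -- nonemptiness
  have hUne : U.Nonempty := ⟨p 0, hP₁ (mem_image_of_mem M₁ (single_mem_parab' le_rfl))⟩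
  have hUcne : Uᶜ.Nonempty := ⟨q 0, hP₂ (mem_image_of_mem M₂ (single_mem_parab' le_rfl))⟩
  have hfront : (frontier U).Nonempty := by
    rw [nonempty_frontier_iff]
    refine ⟨hUne, ?_⟩
    intro h
    obtain ⟨z, hz⟩ := hUcne
    exact hz (h.symm ▸ mem_univ z)
  have hfrontUc : ∀ x : E2', infDist x Uᶜ ≤ infDist x (frontier U) := by
    intro x
    have hsub : frontier U ⊆ closure Uᶜ := by
      rw [frontier_eq_closure_inter_closure]; exact inter_subset_right
    have h := infDist_le_infDist_of_subset hsub hfront (x := x)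
    rwa [infDist_closure] at h
  have hfrontU : ∀ x : E2', infDist x U ≤ infDist x (frontier U) := by
    intro x
    have h := infDist_le_infDist_of_subset frontier_subset_closure hfront (x := x)
    rwa [infDist_closure] at h
  set c : ℝ := β / 2 with hc
  have hcpos : 0 < c := by positivity
  clear_value β A ρ c γ
  refine ⟨γ, 1, c, ρ, hcγ, htends, one_pos, hcpos, hρpos, hmemU, hmemUc, ?_⟩
  intro x hx
  rw [hρ] at hx
  have hx8 : 8 ≤ ‖x‖ := by linarith
  have hx1 : (1:ℝ) ≤ ‖x‖ := by linarith
  have hxpos : (0:ℝ) < ‖x‖ := by linarith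
  have hxc_half : ‖x‖ ^ c ≤ ‖x‖ / 2 := by
    calc ‖x‖ ^ c ≤ ‖x‖ ^ ((1:ℝ)/2) := by
          apply Real.rpow_le_rpow_of_exponent_le hx1
          rw [hc]; linarith
    _ = √‖x‖ := by rw [← Real.sqrt_eq_rpow]
    _ ≤ ‖x‖ / 2 := by
        rw [show ‖x‖ / 2 = √((‖x‖/2) ^ 2) from (Real.sqrt_sq (by linarith)).symm]
        exact Real.sqrt_le_sqrt (by nlinarith)
  have hxc16 : (16:ℝ) ≤ ‖x‖ ^ c := by
    have h1 : (16:ℝ) ^ ((2:ℝ)/β) ≤ ‖x‖ := by linarith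
    calc (16:ℝ) = ((16:ℝ) ^ ((2:ℝ)/β)) ^ c := by
          have hexp : (2:ℝ)/β * c = 1 := by
            rw [hc]; field_simp
          rw [← Real.rpow_mul (by norm_num : (0:ℝ) ≤ 16), hexp, Real.rpow_one]
    _ ≤ ‖x‖ ^ c := Real.rpow_le_rpow h16pos.le h1 hcpos.le
  have hxc_pos : (0:ℝ) < ‖x‖ ^ c := by linarith
  by_cases hcase : ‖x‖ ^ c - 1 ≤ infDist x (Set.range γ)
  · linarith [infDist_nonneg (x := x) (s := frontier U)]
  · push_neg at hcase
    obtain ⟨y, ⟨t, rfl⟩, hdy⟩ := (infDist_lt_iff ⟨γ 0, mem_range_self 0⟩).mp hcase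
    have hdy' : dist x (γ t) ≤ ‖x‖ ^ c := by linarith
    have hnγt : ‖x‖ / 2 ≤ ‖γ t‖ := by
      have h := abs_norm_sub_norm_le x (γ t)
      rw [← dist_eq_norm] at h
      have h2 := (abs_le.mp h).2
      linarith
    have hAx : A + 2 ≤ ‖x‖ / 4 := by linarith
    have htout : 1 < |t| := by
      by_contra hno
      push_neg at hno
      rcases abs_le.mp hno with ⟨h1, h2⟩
      have hb : ‖γ t‖ ≤ 1 + A := by
        rcases eq_or_lt_of_le h1 with he | hlt
        · rw [hγneg t he.symm.le]
          have hh := (hnormq (-t)).2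
          rw [abs_neg, abs_of_nonpos (by linarith : t ≤ 0)] at hh
          linarith
        · have hgm : γ t = mid t := by
            simp only [hγ, if_neg (by linarith : ¬ t ≤ -1), if_pos h2]
          rw [hgm, hmid]
          have hq1 := (hnormq 1).2
          have hp1 := (hnormp 1).2
          rw [abs_one] at hq1 hp1
          calc ‖((1-t)/2) • q 1 + ((1+t)/2) • p 1‖
              ≤ ‖((1-t)/2) • q 1‖ + ‖((1+t)/2) • p 1‖ := norm_add_le _ _
          _ = ((1-t)/2) * ‖q 1‖ + ((1+t)/2) * ‖p 1‖ := by
              rw [norm_smul, norm_smul, Real.norm_eq_abs, Real.norm_eq_abs,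
                abs_of_nonneg (by linarith), abs_of_nonneg (by linarith)]
          _ ≤ ((1-t)/2) * (1 + A) + ((1+t)/2) * (1 + A) := by
              apply add_le_add <;> apply mul_le_mul_of_nonneg_left <;> linarith
          _ = 1 + A := by ring
      linarith
    rcases lt_or_ge 1 t with ht1 | ht1
    · -- t > 1 : the curve point lies deep inside U
      have hγt : γ t = p t := hγpos t ht1.le
      have htlow : ‖x‖ / 4 ≤ t := by
        have h := (hnormp t).2
        rw [abs_of_pos (by linarith : (0:ℝ) < t)] at h
        rw [hγt] at hnγt
        linarith
      have ht2 : (2:ℝ) ≤ t := by linarith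
      have hdeep := deep_axis' hα₁ M₁ hP₁ hUcne (s := t) (by linarith)
      have ht21 : (1:ℝ) ≤ t/2 := by linarith
      have h2a : (t/2:ℝ) ^ β ≤ min (t/2) ((t/2) ^ α₁) := by
        refine le_min ?_ ?_
        · calc (t/2:ℝ) ^ β ≤ (t/2) ^ (1:ℝ) := Real.rpow_le_rpow_of_exponent_le ht21 hβ1
          _ = t/2 := Real.rpow_one _
        · exact Real.rpow_le_rpow_of_exponent_le ht21 hβα₁
      have h3 : (‖x‖/8 : ℝ) ^ β ≤ (t/2) ^ β :=
        Real.rpow_le_rpow (by positivity) (by linarith) hβpos.le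
      have h4 : 2 * ‖x‖ ^ c ≤ (‖x‖/8 : ℝ) ^ β := by
        rw [Real.div_rpow (by positivity) (by norm_num : (0:ℝ) ≤ 8)]
        have h8 : (8:ℝ) ^ β ≤ 8 := by
          calc (8:ℝ) ^ β ≤ 8 ^ (1:ℝ) := Real.rpow_le_rpow_of_exponent_le (by norm_num) hβ1
          _ = 8 := Real.rpow_one _
        have h8pos : (0:ℝ) < 8 ^ β := Real.rpow_pos_of_pos (by norm_num) _
        have hsplit : ‖x‖ ^ β = ‖x‖ ^ c * ‖x‖ ^ c := by
          rw [← Real.rpow_add hxpos]; congr 1; rw [hc]; ring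
        rw [hsplit, le_div_iff₀ h8pos]
        calc 2 * ‖x‖ ^ c * 8 ^ β ≤ 2 * ‖x‖ ^ c * 8 := by
              apply mul_le_mul_of_nonneg_left h8 (by positivity)
        _ = 16 * ‖x‖ ^ c := by ring
        _ ≤ ‖x‖ ^ c * ‖x‖ ^ c := mul_le_mul_of_nonneg_right hxc16 hxc_pos.le
      have h5 : infDist (p t) Uᶜ - dist x (p t) ≤ infDist x Uᶜ := by
        have h := infDist_le_infDist_add_dist (x := p t) (y := x) (s := Uᶜ)
        rw [dist_comm (p t) x] at h
        linarith
      have h6 := hfrontUc x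
      rw [hγt] at hdy'
      have h7 : (t/2:ℝ) ^ β ≤ infDist (p t) Uᶜ := le_trans h2a hdeep
      have hfin : ‖x‖ ^ c ≤ infDist x (frontier U) := by linarith
      linarith [infDist_nonneg (x := x) (s := range γ)]
    · -- t < -1 : the curve point lies deep inside Uᶜ
      have ht1' : t ≤ -1 := by
        rcases abs_cases t with ⟨h, _⟩ | ⟨h, _⟩ <;> [linarith; linarith]
      have hγt : γ t = q (-t) := hγneg t ht1'
      have htlow : ‖x‖ / 4 ≤ -t := by
        have h := (hnormq (-t)).2
        rw [abs_of_pos (by linarith : (0:ℝ) < -t)] at h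
        rw [hγt] at hnγt
        linarith
      have ht2 : (2:ℝ) ≤ -t := by linarith
      have hUcc : (Uᶜᶜ).Nonempty := by rwa [compl_compl]
      have hdeep := deep_axis' hα₂ M₂ hP₂ hUcc (s := -t) (by linarith)
      rw [compl_compl] at hdeep
      have ht21 : (1:ℝ) ≤ -t/2 := by linarith
      have h2a : (-t/2:ℝ) ^ β ≤ min (-t/2) ((-t/2) ^ α₂) := by
        refine le_min ?_ ?_
        · calc (-t/2:ℝ) ^ β ≤ (-t/2) ^ (1:ℝ) := Real.rpow_le_rpow_of_exponent_le ht21 hβ1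
          _ = -t/2 := Real.rpow_one _
        · exact Real.rpow_le_rpow_of_exponent_le ht21 hβα₂
      have h3 : (‖x‖/8 : ℝ) ^ β ≤ (-t/2) ^ β :=
        Real.rpow_le_rpow (by positivity) (by linarith) hβpos.le
      have h4 : 2 * ‖x‖ ^ c ≤ (‖x‖/8 : ℝ) ^ β := by
        rw [Real.div_rpow (by positivity) (by norm_num : (0:ℝ) ≤ 8)]
        have h8 : (8:ℝ) ^ β ≤ 8 := by
          calc (8:ℝ) ^ β ≤ 8 ^ (1:ℝ) := Real.rpow_le_rpow_of_exponent_le (by norm_num) hβ1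
          _ = 8 := Real.rpow_one _
        have h8pos : (0:ℝ) < 8 ^ β := Real.rpow_pos_of_pos (by norm_num) _
        have hsplit : ‖x‖ ^ β = ‖x‖ ^ c * ‖x‖ ^ c := by
          rw [← Real.rpow_add hxpos]; congr 1; rw [hc]; ring
        rw [hsplit, le_div_iff₀ h8pos]
        calc 2 * ‖x‖ ^ c * 8 ^ β ≤ 2 * ‖x‖ ^ c * 8 := by
              apply mul_le_mul_of_nonneg_left h8 (by positivity)
        _ = 16 * ‖x‖ ^ c := by ring
        _ ≤ ‖x‖ ^ c * ‖x‖ ^ c := mul_le_mul_of_nonneg_right hxc16 hxc_pos.le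
      have h5 : infDist (q (-t)) U - dist x (q (-t)) ≤ infDist x U := by
        have h := infDist_le_infDist_add_dist (x := q (-t)) (y := x) (s := U)
        rw [dist_comm (q (-t)) x] at h
        linarith
      have h6 := hfrontU x
      rw [hγt] at hdy'
      have h7 : (-t/2:ℝ) ^ β ≤ infDist (q (-t)) U := by
        have := le_trans h2a hdeep
        simpa using this
      have hfin : ‖x‖ ^ c ≤ infDist x (frontier U) := by linarith
      linarith [infDist_nonneg (x := x) (s := range γ)]
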